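/- For p odd and s an invertible Niho exponent over L, W_{L,s}(a) ≥ 0 for all a ∈ F, where L is the quadratic extension of F with |F| = p^n. -/

import Mathlib

open scoped BigOperators

open Finset in
private lemma wsnb_sum_char_eq_card {p : ℕ} [Fact p.Prime] {F : Type} [AddCommGroup F]
    [Fintype F] (φ : F →+ ZMod p) (h : ∀ y, φ y = 0) :
    ∑ y : F, Complex.exp (2 * Real.pi * Complex.I * ((φ y).val : ℂ) / p)
      = (Fintype.card F : ℂ) := by
  simp [h, Finset.card_univ]

open Finset in
private lemma wsnb_sum_char_eq_zero {p : ℕ} [Fact p.Prime] {F : Type} [AddCommGroup F]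
    [Fintype F] (φ : F →+ ZMod p) (h : ¬ ∀ y, φ y = 0) :
    ∑ y : F, Complex.exp (2 * Real.pi * Complex.I * ((φ y).val : ℂ) / p) = 0 := by
  haveI : NeZero p := ⟨(Fact.out : p.Prime).pos.ne'⟩
  have hp0 : (p : ℕ) ≠ 0 := (Fact.out : p.Prime).pos.ne'
  set ζ : ℂ := Complex.exp (2 * Real.pi * Complex.I / p) with hζdef
  have hprim : IsPrimitiveRoot ζ p := Complex.isPrimitiveRoot_exp p hp0
  have hζp : ζ ^ p = 1 := hprim.pow_eq_one
  let ψ : AddChar F ℂ := (AddChar.zmodChar p hζp).compAddMonoidHom φ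
  have hψ : ∀ y, ψ y = ζ ^ (φ y).val := by
    intro y
    simp [ψ, AddChar.zmodChar_apply]
  have hterm : ∀ y : F, Complex.exp (2 * Real.pi * Complex.I * ((φ y).val : ℂ) / p)
      = ψ y := by
    intro y
    rw [hψ, hζdef, ← Complex.exp_nat_mul]
    congr 1
    ring
  have hne : ψ ≠ 0 := by
    intro h0
    apply h
    intro y
    have h1 : ψ y = 1 := by rw [h0]; simp
    rw [hψ] at h1
    have hdvd : p ∣ (φ y).val := (hprim.pow_eq_one_iff_dvd _).1 h1
    have hv : (φ y).val = 0 := Nat.eq_zero_of_dvd_of_lt hdvd (ZMod.val_lt _)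
    exact (ZMod.val_eq_zero _).1 hv
  calc ∑ y : F, Complex.exp (2 * Real.pi * Complex.I * ((φ y).val : ℂ) / p)
      = ∑ y : F, ψ y := Finset.sum_congr rfl fun y _ => hterm y
    _ = 0 := AddChar.sum_eq_zero_iff_ne_zero.2 hne

open Finset in
private lemma wsnb_card_pow_le {K : Type} [Field K] [Fintype K] [DecidableEq K]
    (d : ℕ) (hd : d ≠ 0) (c : K) :
    (Finset.univ.filter (fun x : K => x ^ d = c)).card ≤ d := by
  classical
  have hne : (Polynomial.X ^ d - Polynomial.C c : Polynomial K) ≠ 0 := by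
    intro h0
    have := Polynomial.natDegree_X_pow_sub_C (n := d) (r := c)
    rw [h0] at this
    simp at this
    omega
  have hsub : (Finset.univ.filter (fun x : K => x ^ d = c)) ⊆
      (Polynomial.X ^ d - Polynomial.C c : Polynomial K).roots.toFinset := by
    intro x hx
    rw [Finset.mem_filter] at hx
    rw [Multiset.mem_toFinset, Polynomial.mem_roots hne]
    simp [Polynomial.IsRoot, hx.2]
  calc (Finset.univ.filter (fun x : K => x ^ d = c)).card
      ≤ _ := Finset.card_le_card hsub
    _ ≤ Multiset.card (Polynomial.X ^ d - Polynomial.C c : Polynomial K).roots :=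
        Multiset.toFinset_card_le _
    _ ≤ _ := Polynomial.card_roots' _
    _ = d := Polynomial.natDegree_X_pow_sub_C

/-- The Weil sum `W_{F,s}(a) = ∑_{x ∈ F} μ(x^s - a x)`, where `μ` is the canonical
additive character `μ(x) = ζ_p^{Tr_{F/𝔽_p}(x)}` of the finite field `F`. -/
noncomputable def weilSum (p : ℕ) (F : Type) [Field F] [Fintype F]
    [Algebra (ZMod p) F] (s : ℕ) (a : F) : ℂ :=
  ∑ x : F, Complex.exp (2 * Real.pi * Complex.I *
    ((Algebra.trace (ZMod p) F (x ^ s - a * x)).val : ℂ) / (p : ℂ))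

open Finset in
set_option maxHeartbeats 1000000 in
/-- for `p` odd and `s` an invertible Niho exponent over `L`,
`W_{L,s}(a)` is a nonnegative rational integer for all `a ∈ F`. -/
theorem weil_sum_nonneg_on_base_field (p n : ℕ) [Fact p.Prime] (hn : 0 < n)
    (F L : Type) [Field F] [Fintype F] [Field L] [Fintype L]
    [Algebra (ZMod p) L] [Algebra F L]
    (hF : Fintype.card F = p ^ n) (hL : Fintype.card L = p ^ (2 * n))
    (k s : ℕ) (hsk : s = 1 + k * (p ^ n - 1)) (hs : Nat.Coprime s (p ^ (2 * n) - 1))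
    (hp : Odd p) (a : F) :
    ∃ m : ℤ, weilSum p L s (algebraMap F L a) = (m : ℂ) ∧ 0 ≤ m := by
  classical
  haveI : NeZero p := ⟨(Fact.out : p.Prime).pos.ne'⟩
  haveI hCharL : CharP L p := charP_of_injective_ringHom (algebraMap (ZMod p) L).injective p
  haveI : ExpChar L p := ExpChar.prime Fact.out
  set q : ℕ := p ^ n with hqdef
  have hp2 : p ≠ 2 := by rintro rfl; exact (by decide : ¬ Odd 2) hp
  have hp3 : 3 ≤ p := by
    have := (Fact.out : p.Prime).two_le; omega
  have hq3 : 3 ≤ q := le_trans hp3 (Nat.le_self_pow hn.ne' p)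
  have hq1 : 1 ≤ q := by omega
  have hqodd : Odd q := hp.pow
  have hcardL : Fintype.card L = q ^ 2 := by
    rw [hL, hqdef, ← pow_mul, Nat.mul_comm]
  set tr : L →ₗ[ZMod p] ZMod p := Algebra.trace (ZMod p) L with htrdef
  set ι : F →+* L := algebraMap F L with hιdef
  -- trace is Frobenius invariant
  have htrp : ∀ z : L, tr (z ^ p) = tr z := by
    intro z
    have he : (algebraMap (ZMod p) L).comp (RingEquiv.refl (ZMod p) : ZMod p →+* ZMod p)
        = (↑(frobeniusEquiv L p) : L →+* L).comp (algebraMap (ZMod p) L) :=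
      RingHom.ext_zmod _ _
    have := Algebra.trace_eq_of_equiv_equiv (RingEquiv.refl (ZMod p)) (frobeniusEquiv L p) he z
    simpa [frobeniusEquiv_def, frobenius_def] using this.symm
  have htrq : ∀ z : L, tr (z ^ q) = tr z := by
    have key : ∀ (i : ℕ) (z : L), tr (z ^ p ^ i) = tr z := by
      intro i
      induction i with
      | zero => intro z; simp
      | succ i ih =>
          intro z
          rw [pow_succ, pow_mul, htrp (z ^ p ^ i), ih]
    intro z; exact key n z
  have htr0 : ∀ z : L, z ^ q = -z → tr z = 0 := by
    intro z hz
    have h1 : tr z = - tr z := by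
      conv_lhs => rw [← htrq z, hz]
      simp
    have h2 : (2 : ZMod p) * tr z = 0 := by
      rw [two_mul]
      nth_rewrite 1 [h1]
      exact neg_add_cancel _
    have h3 : (2 : ZMod p) ≠ 0 := by
      intro h0
      rw [show ((2 : ZMod p)) = ((2 : ℕ) : ZMod p) by norm_num,
        ZMod.natCast_eq_zero_iff] at h0
      have := Nat.le_of_dvd (by norm_num) h0
      omega
    exact (mul_eq_zero.1 h2).resolve_left h3
  -- the additive character
  set E : L → ℂ := fun z => Complex.exp (2 * Real.pi * Complex.I * ((tr z).val : ℂ) / p)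
    with hEdef
  have hE0 : E 0 = 1 := by simp [hEdef]
  -- character sums over F
  have hφ : ∀ b : L, ∃ φ : F →+ ZMod p, ∀ y : F, φ y = tr (ι y * b) := by
    intro b
    refine ⟨AddMonoidHom.mk' (fun y => tr (ι y * b)) ?_, fun y => rfl⟩
    intro y z
    show tr (ι (y + z) * b) = tr (ι y * b) + tr (ι z * b)
    rw [map_add, add_mul, map_add]
  have hS1 : ∀ b : L, (∀ y : F, tr (ι y * b) = 0) →
      ∑ y : F, E (ι y * b) = (q : ℂ) := by
    intro b hb
    obtain ⟨φ, hφb⟩ := hφ b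
    have := wsnb_sum_char_eq_card φ (fun y => by rw [hφb]; exact hb y)
    rw [hF] at this
    calc ∑ y : F, E (ι y * b)
        = ∑ y : F, Complex.exp (2 * Real.pi * Complex.I * ((φ y).val : ℂ) / p) := by
          refine Finset.sum_congr rfl fun y _ => ?_
          rw [hEdef, hφb]
      _ = (q : ℂ) := by rw [this]
  have hS0 : ∀ b : L, ¬ (∀ y : F, tr (ι y * b) = 0) →
      ∑ y : F, E (ι y * b) = 0 := by
    intro b hb
    obtain ⟨φ, hφb⟩ := hφ b
    have := wsnb_sum_char_eq_zero φ (fun hall => hb (fun y => by rw [← hφb]; exact hall y))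
    calc ∑ y : F, E (ι y * b)
        = ∑ y : F, Complex.exp (2 * Real.pi * Complex.I * ((φ y).val : ℂ) / p) := by
          refine Finset.sum_congr rfl fun y _ => ?_
          rw [hEdef, hφb]
      _ = 0 := this
  -- unfold the Weil sum
  have hW : weilSum p L s (ι a) = ∑ x : L, E (x ^ s - ι a * x) := rfl
  have hsne : s ≠ 0 := by omega
  have hsplit : ∑ x : L, E (x ^ s - ι a * x)
      = 1 + ∑ x ∈ Finset.univ.erase (0 : L), E (x ^ s - ι a * x) := by
    rw [← Finset.add_sum_erase _ _ (Finset.mem_univ (0 : L))]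
    congr 1
    rw [zero_pow hsne, mul_zero, sub_zero, hE0]
  have hsummand : ∀ x : L, x ^ s - ι a * x = x * ((x ^ (q - 1)) ^ k - ι a) := by
    intro x
    have hxs : x ^ s = x * (x ^ (q - 1)) ^ k := by
      rw [hsk, pow_add, pow_one, Nat.mul_comm, pow_mul]
    rw [hxs]; ring
  set T : Finset L := (Finset.univ.erase (0 : L)).image (fun x => x ^ (q - 1)) with hTdef
  have hfiberwise : ∑ x ∈ Finset.univ.erase (0 : L), E (x ^ s - ι a * x)
      = ∑ u ∈ T, ∑ x ∈ (Finset.univ.erase (0 : L)).filter (fun x => x ^ (q - 1) = u),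
          E (x * (u ^ k - ι a)) := by
    rw [← Finset.sum_fiberwise_of_maps_to (g := fun x : L => x ^ (q - 1))
      (fun x hx => Finset.mem_image_of_mem _ hx)]
    refine Finset.sum_congr rfl fun u hu => Finset.sum_congr rfl fun x hx => ?_
    rw [Finset.mem_filter] at hx
    rw [hsummand x, hx.2]
  have hιinj : Function.Injective ι := ι.injective
  have hιne : ∀ y : F, y ≠ 0 → ι y ≠ 0 := by
    intro y hy h0
    exact hy (hιinj (by rw [h0, map_zero]))
  have hfib_eq : ∀ x₀ : L, x₀ ≠ 0 →
      (Finset.univ.erase (0 : L)).filter (fun x => x ^ (q - 1) = x₀ ^ (q - 1))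
        = (Finset.univ.erase (0 : F)).image (fun y => x₀ * ι y) := by
    intro x₀ hx₀
    have hmulinj : Function.Injective (fun y : F => x₀ * ι y) := by
      intro y z hyz
      exact hιinj (mul_left_cancel₀ hx₀ hyz)
    refine (Finset.eq_of_subset_of_card_le ?_ ?_).symm
    · intro z hz
      rw [Finset.mem_image] at hz
      obtain ⟨y, hy, rfl⟩ := hz
      rw [Finset.mem_erase] at hy
      have hy0 : y ≠ 0 := hy.1
      rw [Finset.mem_filter, Finset.mem_erase]
      refine ⟨⟨mul_ne_zero hx₀ (hιne y hy0), Finset.mem_univ _⟩, ?_⟩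
      rw [mul_pow, ← map_pow]
      have hone : y ^ (q - 1) = 1 := by
        have := FiniteField.pow_card_sub_one_eq_one y hy0
        rwa [hF] at this
      rw [hone, map_one, mul_one]
    · have h1 : ((Finset.univ.erase (0 : L)).filter
          (fun x => x ^ (q - 1) = x₀ ^ (q - 1))).card ≤ q - 1 := by
        refine le_trans (Finset.card_le_card ?_)
          (wsnb_card_pow_le (q - 1) (by omega) (x₀ ^ (q - 1)))
        intro z hz
        rw [Finset.mem_filter] at hz ⊢
        exact ⟨Finset.mem_univ _, hz.2⟩
      have h2 : ((Finset.univ.erase (0 : F)).image (fun y => x₀ * ι y)).card = q - 1 := by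
        rw [Finset.card_image_of_injective _ hmulinj,
          Finset.card_erase_of_mem (Finset.mem_univ _), Finset.card_univ, hF]
      rw [h2]; exact h1
  -- the counting predicate
  set Q : L → Prop := fun u => ∀ x : L, x ≠ 0 → x ^ (q - 1) = u →
    ∀ y : F, tr (ι y * (x * (u ^ k - ι a))) = 0 with hQdef
  have hinner : ∀ u ∈ T,
      ∑ x ∈ (Finset.univ.erase (0 : L)).filter (fun x => x ^ (q - 1) = u),
        E (x * (u ^ k - ι a)) = (if Q u then (q : ℂ) else 0) - 1 := by
    intro u hu
    rw [hTdef, Finset.mem_image] at hu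
    obtain ⟨x₀, hx₀mem, hx₀⟩ := hu
    rw [Finset.mem_erase] at hx₀mem
    have hx₀ne : x₀ ≠ 0 := hx₀mem.1
    subst hx₀
    rw [hfib_eq x₀ hx₀ne, Finset.sum_image (fun y _ z _ hyz =>
      hιinj (mul_left_cancel₀ hx₀ne hyz))]
    set b : L := x₀ * ((x₀ ^ (q - 1)) ^ k - ι a) with hbdef
    have hbterm : ∀ y : F, x₀ * ι y * ((x₀ ^ (q - 1)) ^ k - ι a) = ι y * b := by
      intro y; rw [hbdef]; ring
    have hsum1 : ∑ y ∈ Finset.univ.erase (0 : F), E (x₀ * ι y * ((x₀ ^ (q - 1)) ^ k - ι a))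
        = (∑ y : F, E (ι y * b)) - 1 := by
      rw [Finset.sum_erase_eq_sub (Finset.mem_univ (0 : F))]
      congr 1
      · exact Finset.sum_congr rfl fun y _ => by rw [hbterm]
      · rw [map_zero, mul_zero, zero_mul, hE0]
    rw [hsum1]
    congr 1
    by_cases hQu : Q (x₀ ^ (q - 1))
    · rw [if_pos hQu]
      exact hS1 b (hQu x₀ hx₀ne rfl)
    · rw [if_neg hQu]
      refine hS0 b ?_
      intro hall
      apply hQu
      intro x hx hxq y
      -- x is in the fiber, hence x = x₀ * ι y₀ for some y₀ ≠ 0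
      have hxmem : x ∈ (Finset.univ.erase (0 : L)).filter
          (fun z => z ^ (q - 1) = x₀ ^ (q - 1)) := by
        rw [Finset.mem_filter, Finset.mem_erase]
        exact ⟨⟨hx, Finset.mem_univ _⟩, hxq⟩
      rw [hfib_eq x₀ hx₀ne, Finset.mem_image] at hxmem
      obtain ⟨y₀, hy₀, rfl⟩ := hxmem
      have harg : ι y * (x₀ * ι y₀ * ((x₀ ^ (q - 1)) ^ k - ι a)) = ι (y * y₀) * b := by
        rw [map_mul, hbdef]; ring
      rw [harg]
      exact hall (y * y₀)
  -- assemble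
  set N : ℕ := (T.filter Q).card with hNdef
  have hsumT : ∑ u ∈ T, ((if Q u then (q : ℂ) else 0) - 1)
      = (N : ℂ) * q - T.card := by
    rw [Finset.sum_sub_distrib, Finset.sum_const, ← Finset.sum_filter]
    simp [hNdef, mul_comm]
  have hWval : weilSum p L s (ι a) = 1 + ((N : ℂ) * q - T.card) := by
    rw [hW, hsplit, hfiberwise, Finset.sum_congr rfl hinner, hsumT]
  -- bound on T
  have hTcard : T.card ≤ q + 1 := by
    have hsub : T ⊆ Finset.univ.filter (fun u : L => u ^ (q + 1) = 1) := by
      intro u hu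
      rw [hTdef, Finset.mem_image] at hu
      obtain ⟨x, hx, rfl⟩ := hu
      rw [Finset.mem_erase] at hx
      rw [Finset.mem_filter]
      refine ⟨Finset.mem_univ _, ?_⟩
      rw [← pow_mul]
      have hqq : (q - 1) * (q + 1) = q ^ 2 - 1 := by
        have hq2 : 1 ≤ q ^ 2 := Nat.one_le_pow _ _ (by omega)
        zify [hq1, hq2]
        ring
      rw [hqq]
      have := FiniteField.pow_card_sub_one_eq_one x hx.1
      rwa [hcardL] at this
    calc T.card ≤ _ := Finset.card_le_card hsub
      _ ≤ q + 1 := wsnb_card_pow_le (q + 1) (by omega) 1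
  -- N ≥ 1 : u = -1 works
  have hN1 : 1 ≤ N := by
    have hx0 : ∃ x : L, x ≠ 0 ∧ x ^ (q - 1) = -1 := by
      obtain ⟨g, hg⟩ := IsCyclic.exists_generator (α := Lˣ)
      have hord : orderOf g = q ^ 2 - 1 := by
        rw [orderOf_eq_card_of_forall_mem_zpowers hg, Nat.card_units,
          Nat.card_eq_fintype_card, hcardL]
      obtain ⟨r, hr⟩ := hqodd
      have hr1 : 1 ≤ r := by omega
      have hM : q ^ 2 - 1 = 4 * r ^ 2 + 4 * r := by
        have hq2 : q ^ 2 = 4 * r ^ 2 + 4 * r + 1 := by rw [hr]; ring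
        omega
      set u1 : Lˣ := g ^ ((r + 1) * (2 * r)) with hu1
      have hsq : u1 * u1 = 1 := by
        rw [hu1, ← pow_add]
        have he : (r + 1) * (2 * r) + (r + 1) * (2 * r) = q ^ 2 - 1 := by rw [hM]; ring
        rw [he, ← hord, pow_orderOf_eq_one]
      have hne1 : u1 ≠ 1 := by
        intro h1
        rw [hu1] at h1
        have hdvd : orderOf g ∣ (r + 1) * (2 * r) := orderOf_dvd_of_pow_eq_one h1
        rw [hord, hM] at hdvd
        have hle := Nat.le_of_dvd (by positivity) hdvd
        nlinarith
      have hval : (u1 : L) = -1 := by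
        have hsq' : (u1 : L) * (u1 : L) = 1 := by rw [← Units.val_mul, hsq, Units.val_one]
        rcases mul_self_eq_one_iff.1 hsq' with h | h
        · exact absurd (Units.val_eq_one.1 h) hne1
        · exact h
      refine ⟨(g : L) ^ (r + 1), pow_ne_zero _ (Units.ne_zero g), ?_⟩
      rw [← pow_mul]
      have hexp : (r + 1) * (q - 1) = (r + 1) * (2 * r) := by
        have : q - 1 = 2 * r := by omega
        rw [this]
      rw [hexp, ← Units.val_pow_eq_pow_val, ← hu1, hval]
    obtain ⟨x₀, hx₀ne, hx₀⟩ := hx0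
    have hmemT : (-1 : L) ∈ T := by
      rw [hTdef, Finset.mem_image]
      exact ⟨x₀, by rw [Finset.mem_erase]; exact ⟨hx₀ne, Finset.mem_univ _⟩, hx₀⟩
    have hQm1 : Q (-1) := by
      intro x hx hxq y
      apply htr0
      have hq' : q = (q - 1) + 1 := by omega
      have hxq' : x ^ q = -x := by
        rw [hq', pow_succ, hxq]; ring
      have hyq : (ι y) ^ q = ι y := by
        rw [← map_pow]
        congr 1
        rw [← hF]
        exact FiniteField.pow_card y
      have haq : (ι a) ^ q = ι a := by
        rw [← map_pow]
        congr 1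
        rw [← hF]
        exact FiniteField.pow_card a
      have hw : ((-1 : L) ^ k) ^ q = (-1 : L) ^ k := by
        rcases Nat.even_or_odd k with hk | hk
        · rw [hk.neg_one_pow, one_pow]
        · rw [hk.neg_one_pow]
          exact Odd.neg_one_pow hqodd
      calc (ι y * (x * ((-1 : L) ^ k - ι a))) ^ q
          = (ι y) ^ q * (x ^ q * ((-1 : L) ^ k - ι a) ^ q) := by rw [mul_pow, mul_pow]
        _ = ι y * ((-x) * (((-1 : L) ^ k) ^ q - (ι a) ^ q)) := by
            rw [hyq, hxq', hqdef, sub_pow_char_pow]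
        _ = - (ι y * (x * ((-1 : L) ^ k - ι a))) := by rw [hw, haq]; ring
    have hmem : (-1 : L) ∈ T.filter Q := Finset.mem_filter.2 ⟨hmemT, hQm1⟩
    rw [hNdef]
    exact Finset.card_pos.2 ⟨_, hmem⟩
  -- conclude
  refine ⟨(N : ℤ) * q + 1 - T.card, ?_, ?_⟩
  · rw [hWval]
    push_cast
    ring
  · have h1 : (q : ℤ) ≤ (N : ℤ) * (q : ℤ) :=
      le_mul_of_one_le_left (by positivity) (by exact_mod_cast hN1)
    have h2 : (T.card : ℤ) ≤ (q : ℤ) + 1 := by exact_mod_cast hTcard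
    omega
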